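/- arXiv:1406.7039 — 3 statements merged into one kernel-verified Lean document; each statement's English description precedes it below -/
import Mathlib

section
/- Let p ≥ 3 be an odd integer and let f be a real-valued function on the positive integers satisfying: f(q) = f(q − 2p) − (p² − 1) whenever q > 2p, and f(q) = 1 − p² − f(2p − q) whenever p ≤ q < 2p. Then for all integers n ≥ 1 and 0 < r < p: if n is even, f(np + r) = f(r) − n(p² − 1)/2, and if n is odd, f(np + r) = −f(p − r) − (n + 1)(p² − 1)/2. -/
/-- Unfolding of the Gordon–Litherland–Murasugi signature recursion for `p` odd:
if `f(q) = f(q − 2p) − (p² − 1)` for `q > 2p` and `f(q) = 1 − p² − f(2p − q)` for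
`p ≤ q < 2p`, then for `n ≥ 1` and `0 < r < p`:
`f(np + r) = f(r) − n(p² − 1)/2` when `n` is even, and
`f(np + r) = −f(p − r) − (n + 1)(p² − 1)/2` when `n` is odd. -/
theorem glm_recursion_odd (p : ℤ) (hp : 3 ≤ p) (hpodd : Odd p) (f : ℤ → ℝ)
    (h1 : ∀ q : ℤ, 2 * p < q → f q = f (q - 2 * p) - ((p : ℝ) ^ 2 - 1))
    (h2 : ∀ q : ℤ, p ≤ q → q < 2 * p → f q = 1 - (p : ℝ) ^ 2 - f (2 * p - q)) :
    ∀ n r : ℤ, 1 ≤ n → 0 < r → r < p →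
      (Even n → f (n * p + r) = f r - (n : ℝ) * ((p : ℝ) ^ 2 - 1) / 2) ∧
      (Odd n → f (n * p + r) = -f (p - r) - ((n : ℝ) + 1) * ((p : ℝ) ^ 2 - 1) / 2) := by
  have key : ∀ m : ℕ, ∀ r : ℤ, 0 < r → r < p →
      (Even ((m : ℤ) + 1) →
        f (((m : ℤ) + 1) * p + r) = f r - ((m : ℝ) + 1) * ((p : ℝ) ^ 2 - 1) / 2) ∧
      (Odd ((m : ℤ) + 1) →
        f (((m : ℤ) + 1) * p + r) = -f (p - r) - (((m : ℝ) + 1) + 1) * ((p : ℝ) ^ 2 - 1) / 2) := by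
    intro m
    induction m using Nat.strong_induction_on with
    | _ m ih =>
      match m with
      | 0 =>
        intro r hr hrp
        constructor
        · intro h
          simp at h
        · intro _
          have e := h2 (p + r) (by linarith) (by linarith)
          have : ((0 : ℕ) : ℤ) + 1 = 1 := by norm_num
          rw [this, show (1 : ℤ) * p + r = p + r by ring, e,
            show 2 * p - (p + r) = p - r by ring]
          push_cast
          ring
      | 1 =>
        intro r hr hrp
        constructor
        · intro _
          have e := h1 (2 * p + r) (by linarith)
          rw [show (((1 : ℕ) : ℤ) + 1) * p + r = 2 * p + r by push_cast; ring, e,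
            show 2 * p + r - 2 * p = r by ring]
          push_cast
          ring
        · intro h
          rw [show ((1 : ℕ) : ℤ) + 1 = 2 by norm_num] at h
          exact absurd h (by decide)
      | (k + 2) =>
        intro r hr hrp
        have e := h1 (((k : ℤ) + 2 + 1) * p + r) (by nlinarith)
        have e2 : ((k : ℤ) + 2 + 1) * p + r - 2 * p = ((k : ℤ) + 1) * p + r := by ring
        have ihk := ih k (by omega) r hr hrp
        constructor
        · intro h
          have hk : Even ((k : ℤ) + 1) := by
            rcases h with ⟨t, ht⟩
            exact ⟨t - 1, by omega⟩
          have := ihk.1 hk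
          rw [show (((k : ℕ) + 2 : ℕ) : ℤ) + 1 = (k : ℤ) + 2 + 1 by push_cast; ring, e, e2, this]
          push_cast
          ring
        · intro h
          have hk : Odd ((k : ℤ) + 1) := by
            rcases h with ⟨t, ht⟩
            exact ⟨t - 1, by omega⟩
          have := ihk.2 hk
          rw [show (((k : ℕ) + 2 : ℕ) : ℤ) + 1 = (k : ℤ) + 2 + 1 by push_cast; ring, e, e2, this]
          push_cast
          ring
  intro n r hn hr hrp
  obtain ⟨m, hm⟩ : ∃ m : ℕ, n = (m : ℤ) + 1 := by
    refine ⟨(n - 1).toNat, ?_⟩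
    omega
  subst hm
  have := key m r hr hrp
  constructor
  · intro h
    have := this.1 h
    rw [this]
    push_cast
    ring
  · intro h
    have := this.2 h
    rw [this]
    push_cast
    ring
end

section
/- Let p ≥ 4 be an even integer and let f be a real-valued function on the positive integers satisfying: f(q) = f(q − 2p) − p² whenever q > 2p, and f(q) = 2 − p² − f(2p − q) whenever p ≤ q < 2p. Then for all integers n ≥ 1 and 0 < r < p: if n is even, f(np + r) = f(r) − np²/2, and if n is odd, f(np + r) = −f(p − r) − (n + 1)p²/2 + 2. -/
/-- Unfolding of the Gordon–Litherland–Murasugi signature recursion for `p` even: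
if `f(q) = f(q − 2p) − p²` for `q > 2p` and `f(q) = 2 − p² − f(2p − q)` for
`p ≤ q < 2p`, then for `n ≥ 1` and `0 < r < p`:
`f(np + r) = f(r) − np²/2` when `n` is even, and
`f(np + r) = −f(p − r) − (n + 1)p²/2 + 2` when `n` is odd. -/
theorem glm_recursion_even (p : ℤ) (hp : 4 ≤ p) (hpeven : Even p) (f : ℤ → ℝ)
    (h1 : ∀ q : ℤ, 2 * p < q → f q = f (q - 2 * p) - (p : ℝ) ^ 2)
    (h2 : ∀ q : ℤ, p ≤ q → q < 2 * p → f q = 2 - (p : ℝ) ^ 2 - f (2 * p - q)) :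
    ∀ n r : ℤ, 1 ≤ n → 0 < r → r < p →
      (Even n → f (n * p + r) = f r - (n : ℝ) * (p : ℝ) ^ 2 / 2) ∧
      (Odd n → f (n * p + r) = -f (p - r) - ((n : ℝ) + 1) * (p : ℝ) ^ 2 / 2 + 2) := by
  have key : ∀ m : ℕ, ∀ n : ℤ, n = (m : ℤ) → 1 ≤ n → ∀ r : ℤ, 0 < r → r < p →
      (Even n → f (n * p + r) = f r - (n : ℝ) * (p : ℝ) ^ 2 / 2) ∧
      (Odd n → f (n * p + r) = -f (p - r) - ((n : ℝ) + 1) * (p : ℝ) ^ 2 / 2 + 2) := by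
    intro m
    induction m using Nat.strong_induction_on with
    | _ m ih =>
      intro n hm hn r hr1 hr2
      have hcase : n = 1 ∨ n = 2 ∨ 3 ≤ n := by omega
      rcases hcase with rfl | rfl | h3
      · constructor
        · intro h
          exact absurd (Int.even_iff.mp h) (by omega)
        · intro _
          rw [show (1:ℤ) * p + r = p + r from by ring,
            h2 (p + r) (by omega) (by omega),
            show 2 * p - (p + r) = p - r from by ring]
          push_cast; ring
      · constructor
        · intro _
          rw [show (2:ℤ) * p + r = 2 * p + r from by ring,
            h1 (2 * p + r) (by omega),
            show 2 * p + r - 2 * p = r from by ring]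
          push_cast; ring
        · intro h
          exact absurd (Int.odd_iff.mp h) (by omega)
      · have hq : 2 * p < n * p + r := by nlinarith
        rw [h1 (n * p + r) hq, show n * p + r - 2 * p = (n - 2) * p + r from by ring]
        have hprev := ih (m - 2) (by omega) (n - 2) (by omega) (by omega) r hr1 hr2
        constructor
        · intro h
          have hn' : Even (n - 2) := Int.even_iff.mpr (by
            have := Int.even_iff.mp h; omega)
          rw [hprev.1 hn']; push_cast; ring
        · intro h
          have hn' : Odd (n - 2) := Int.odd_iff.mpr (by
            have := Int.odd_iff.mp h; omega)
          rw [hprev.2 hn']; push_cast; ring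
  intro n r hn hr1 hr2
  exact key n.toNat n (by omega) hn r hr1 hr2
end

section
/- Fix an integer n ≥ 0 and define d : ℤ × ℤ → ℕ by: d(m, 1) = 2ⁿ·C(n, 1−m) if 0 ≤ 1−m ≤ n and 0 otherwise; d(m, 0) = (1 if m = 0 else 0) + (2^(n+1)·C(n, −m) if 0 ≤ −m ≤ n and 0 otherwise); d(m, −1) = 2ⁿ·C(n, −1−m) if 0 ≤ −1−m ≤ n and 0 otherwise; and d(m, s) = 0 for all other s. Then the set {s − m : d(m, s) ≠ 0} equals {0, 1, …, n}. In particular, (max − min of this set) + 1 = n + 1. -/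
/-- Hedden's computation: the dimension of `HFK-hat` of the `n`-th iterated positive
untwisted Whitehead double of the figure-eight knot in Maslov grading `m` and
Alexander grading `s`. -/
def hfkDim (n : ℕ) (m s : ℤ) : ℕ :=
  if s = 1 then
    (if 0 ≤ 1 - m ∧ 1 - m ≤ (n : ℤ) then 2 ^ n * n.choose (1 - m).toNat else 0)
  else if s = 0 then
    (if m = 0 then 1 else 0) +
      (if 0 ≤ -m ∧ -m ≤ (n : ℤ) then 2 ^ (n + 1) * n.choose (-m).toNat else 0)
  else if s = -1 then
    (if 0 ≤ -1 - m ∧ -1 - m ≤ (n : ℤ) then 2 ^ n * n.choose (-1 - m).toNat else 0)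
  else 0

lemma hfk_set_eq (n : ℕ) :
    {δ : ℤ | ∃ m s : ℤ, hfkDim n m s ≠ 0 ∧ δ = s - m} = Set.Icc (0 : ℤ) (n : ℤ) := by
  ext δ
  simp only [Set.mem_setOf_eq, Set.mem_Icc]
  constructor
  · rintro ⟨m, s, hne, rfl⟩
    rcases eq_or_ne s 1 with rfl | h1
    · simp only [hfkDim, if_pos rfl] at hne
      split_ifs at hne <;> omega
    · rcases eq_or_ne s 0 with rfl | h2
      · simp only [hfkDim, if_neg (by norm_num : (0:ℤ) ≠ 1), if_pos rfl] at hne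
        split_ifs at hne <;> omega
      · rcases eq_or_ne s (-1) with rfl | h3
        · simp only [hfkDim, if_neg (by norm_num : (-1:ℤ) ≠ 1),
            if_neg (by norm_num : (-1:ℤ) ≠ 0), if_pos rfl] at hne
          split_ifs at hne <;> omega
        · simp [hfkDim, h1, h2, h3] at hne
  · rintro ⟨h0, hn⟩
    refine ⟨-δ, 0, ?_, by ring⟩
    have hle : δ.toNat ≤ n := by omega
    have hpos : 0 < n.choose δ.toNat := Nat.choose_pos hle
    unfold hfkDim
    simp only [neg_neg, if_neg (by norm_num : (0:ℤ) ≠ 1), if_pos rfl,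
      if_pos (⟨h0, hn⟩ : (0:ℤ) ≤ δ ∧ δ ≤ (n:ℤ))]
    have : 0 < 2 ^ (n + 1) * n.choose δ.toNat := by positivity
    exact (Nat.add_pos_right _ this).ne'

/-- The set of `δ`-gradings `δ = s − m` supporting `HFK-hat(W_n)` is exactly
`{0, 1, …, n}`; in particular the width `(max − min) + 1` equals `n + 1`. -/
theorem hfk_width_whitehead (n : ℕ) :
    {δ : ℤ | ∃ m s : ℤ, hfkDim n m s ≠ 0 ∧ δ = s - m} = Set.Icc (0 : ℤ) (n : ℤ) ∧
      sSup {δ : ℤ | ∃ m s : ℤ, hfkDim n m s ≠ 0 ∧ δ = s - m} -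
        sInf {δ : ℤ | ∃ m s : ℤ, hfkDim n m s ≠ 0 ∧ δ = s - m} + 1 = (n : ℤ) + 1 := by
  have h := hfk_set_eq n
  refine ⟨h, ?_⟩
  rw [h, csSup_Icc (by exact_mod_cast Int.ofNat_nonneg n),
      csInf_Icc (by exact_mod_cast Int.ofNat_nonneg n)]
  ring
end
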